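/- Lawson duality: the category of continuous dcpos (domains) with Scott-open-filter-reflecting maps is self-dual. Concretely, for a domain X let FX be the set of Scott-open filters of X ordered by inclusion; then FX is again a domain, the map η_X : X → FFX, η_X(x) = {α ∈ FX : x ∈ α}, is an order isomorphism, and for a Scott-open-filter-reflecting map f : X → Y (meaning f⁻¹(β) ∈ FX for every β ∈ FY), the map F f : FY → FX, β ↦ f⁻¹(β), is again Scott-open-filter-reflecting. -/
import Mathlib


def IsDcpoP (X : Type*) [Preorder X] : Prop :=
  ∀ D : Set X, D.Nonempty → DirectedOn (· ≤ ·) D → ∃ s, IsLUB D s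

def wayBelow {X : Type*} [Preorder X] (y x : X) : Prop :=
  ∀ D : Set X, D.Nonempty → DirectedOn (· ≤ ·) D →
    ∀ s, IsLUB D s → x ≤ s → ∃ d ∈ D, y ≤ d

/-- A domain: a continuous dcpo. -/
def IsContDomain (X : Type*) [Preorder X] : Prop :=
  IsDcpoP X ∧
  ∀ x : X, ({y | wayBelow y x}).Nonempty ∧
    DirectedOn (· ≤ ·) {y | wayBelow y x} ∧ IsLUB {y | wayBelow y x} x

/-- A Scott-open filter: nonempty, upward closed, downward directed, inaccessible
by directed suprema. -/
def IsScottOpenFilter {X : Type*} [Preorder X] (α : Set X) : Prop :=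
  α.Nonempty ∧
  (∀ ⦃a b : X⦄, a ≤ b → a ∈ α → b ∈ α) ∧
  (∀ a ∈ α, ∀ b ∈ α, ∃ c ∈ α, c ≤ a ∧ c ≤ b) ∧
  (∀ D : Set X, D.Nonempty → DirectedOn (· ≤ ·) D →
    ∀ s, IsLUB D s → s ∈ α → ∃ d ∈ D, d ∈ α)

/-- The poset of Scott-open filters of `X`, ordered by inclusion. -/
abbrev SOF (X : Type*) [Preorder X] := {α : Set X // IsScottOpenFilter α}

section Basic
variable {X : Type*} [Preorder X]

theorem wb_le {y x : X} (h : wayBelow y x) : y ≤ x := by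
  obtain ⟨d, hd, hyd⟩ := h {x} ⟨x, rfl⟩
    (fun a ha b hb => ⟨x, rfl, by simp_all, by simp_all⟩) x isLUB_singleton le_rfl
  simp only [Set.mem_singleton_iff] at hd; subst hd; exact hyd

theorem wb_of_le_left {y w x : X} (h : y ≤ w) (hw : wayBelow w x) : wayBelow y x := by
  intro D hne hdir s hs hxs
  obtain ⟨d, hd, hwd⟩ := hw D hne hdir s hs hxs
  exact ⟨d, hd, h.trans hwd⟩

theorem wb_of_le_right {y x x' : X} (h : wayBelow y x) (hx : x ≤ x') : wayBelow y x' := by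
  intro D hne hdir s hs hxs
  exact h D hne hdir s hs (hx.trans hxs)

theorem interp (hX : IsContDomain X) {y x : X} (h : wayBelow y x) :
    ∃ z, wayBelow y z ∧ wayBelow z x := by
  set D := {w : X | ∃ z, wayBelow w z ∧ wayBelow z x} with hD
  have hne : D.Nonempty := by
    obtain ⟨z, hz⟩ := (hX.2 x).1
    obtain ⟨w, hw⟩ := (hX.2 z).1
    exact ⟨w, z, hw, hz⟩
  have hdir : DirectedOn (· ≤ ·) D := by
    rintro w₁ ⟨z₁, hw₁, hz₁⟩ w₂ ⟨z₂, hw₂, hz₂⟩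
    obtain ⟨z₃, hz₃, h₁₃, h₂₃⟩ := (hX.2 x).2.1 z₁ hz₁ z₂ hz₂
    have hw₁' : wayBelow w₁ z₃ := wb_of_le_right hw₁ h₁₃
    have hw₂' : wayBelow w₂ z₃ := wb_of_le_right hw₂ h₂₃
    obtain ⟨w₃, hw₃, hle₁, hle₂⟩ := (hX.2 z₃).2.1 w₁ hw₁' w₂ hw₂'
    exact ⟨w₃, ⟨z₃, hw₃, hz₃⟩, hle₁, hle₂⟩
  have hlub : IsLUB D x := by
    constructor
    · rintro w ⟨z, hwz, hzx⟩; exact (wb_le hwz).trans (wb_le hzx)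
    · intro u hu
      refine ((hX.2 x).2.2).2 (fun z hz => ?_)
      exact ((hX.2 z).2.2).2 (fun w hw => hu ⟨z, hw, hz⟩)
  obtain ⟨w, hwD, hyw⟩ := h D hne hdir x hlub le_rfl
  obtain ⟨z, hwz, hzx⟩ := hwD
  exact ⟨z, wb_of_le_left hyw hwz, hzx⟩

theorem lemA (hX : IsContDomain X) {y x : X} (h : wayBelow y x) :
    ∃ γ : Set X, IsScottOpenFilter γ ∧ x ∈ γ ∧ ∀ a ∈ γ, wayBelow y a := by
  have step : ∀ z : {z : X // wayBelow y z}, ∃ z' : {z : X // wayBelow y z}, wayBelow z'.1 z.1 := by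
    intro z
    obtain ⟨w, h1, h2⟩ := interp hX z.2
    exact ⟨⟨w, h1⟩, h2⟩
  choose st hst using step
  obtain ⟨z₀, hz₀y, hz₀x⟩ := interp hX h
  let F : ℕ → {z : X // wayBelow y z} := fun n => Nat.rec ⟨z₀, hz₀y⟩ (fun _ p => st p) n
  have hF : ∀ n, wayBelow (F (n+1)).1 (F n).1 := fun n => hst (F n)
  have hanti : Antitone (fun n => (F n).1) :=
    antitone_nat_of_succ_le (fun n => wb_le (hF n))
  refine ⟨{a | ∃ n, (F n).1 ≤ a}, ⟨⟨x, 0, wb_le hz₀x⟩, ?_, ?_, ?_⟩, ⟨0, wb_le hz₀x⟩, ?_⟩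
  · rintro a b hab ⟨n, hn⟩; exact ⟨n, hn.trans hab⟩
  · rintro a ⟨m, hm⟩ b ⟨n, hn⟩
    refine ⟨(F (max m n)).1, ⟨max m n, le_rfl⟩, ?_, ?_⟩
    · exact (hanti (le_max_left m n)).trans hm
    · exact (hanti (le_max_right m n)).trans hn
  · rintro D hne hdir s hs ⟨n, hn⟩
    obtain ⟨d, hd, hfd⟩ := (wb_of_le_right (hF n) hn) D hne hdir s hs le_rfl
    exact ⟨d, hd, n + 1, hfd⟩
  · rintro a ⟨n, hn⟩
    exact wb_of_le_right (wb_of_le_left le_rfl (F n).2) hn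

theorem rounded (hX : IsContDomain X) {α : Set X} (hα : IsScottOpenFilter α) {x : X}
    (hx : x ∈ α) : ∃ y ∈ α, wayBelow y x := by
  obtain ⟨hne, hdir, hlub⟩ := hX.2 x
  obtain ⟨d, hd, hdα⟩ := hα.2.2.2 _ hne hdir x hlub hx
  exact ⟨d, hdα, hd⟩

theorem sof_of_rounded {α : Set X} (hne : α.Nonempty)
    (hup : ∀ ⦃a b : X⦄, a ≤ b → a ∈ α → b ∈ α)
    (hdir : ∀ a ∈ α, ∀ b ∈ α, ∃ c ∈ α, c ≤ a ∧ c ≤ b)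
    (hrd : ∀ x ∈ α, ∃ y ∈ α, wayBelow y x) : IsScottOpenFilter α := by
  refine ⟨hne, hup, hdir, ?_⟩
  intro D hDne hDdir s hs hsα
  obtain ⟨y, hyα, hyx⟩ := hrd s hsα
  obtain ⟨d, hd, hyd⟩ := hyx D hDne hDdir s hs le_rfl
  exact ⟨d, hd, hup hyd hyα⟩

theorem separate (hX : IsContDomain X) {x y : X} (h : ¬ x ≤ y) :
    ∃ γ : Set X, IsScottOpenFilter γ ∧ x ∈ γ ∧ y ∉ γ := by
  have h2 : ¬ ∀ z, wayBelow z x → z ≤ y := fun H => h (((hX.2 x).2.2).2 fun z hz => H z hz)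
  push_neg at h2
  obtain ⟨z, hzx, hzy⟩ := h2
  obtain ⟨γ, hγ, hxγ, hsub⟩ := lemA hX hzx
  exact ⟨γ, hγ, hxγ, fun hy => hzy (wb_le (hsub y hy))⟩

end Basic

section SOFLevel
variable {X : Type*} [Preorder X]

theorem sof_union {D : Set (SOF X)} (hne : D.Nonempty) (hdir : DirectedOn (· ≤ ·) D) :
    IsScottOpenFilter (⋃ γ ∈ D, γ.1) := by
  refine ⟨?_, ?_, ?_, ?_⟩
  · obtain ⟨γ, hγ⟩ := hne
    obtain ⟨a, ha⟩ := γ.2.1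
    exact ⟨a, Set.mem_biUnion hγ ha⟩
  · rintro a b hab ha
    obtain ⟨γ, hγ, haγ⟩ := Set.mem_iUnion₂.1 ha
    exact Set.mem_biUnion hγ (γ.2.2.1 hab haγ)
  · rintro a ha b hb
    obtain ⟨γ, hγ, haγ⟩ := Set.mem_iUnion₂.1 ha
    obtain ⟨δ, hδ, hbδ⟩ := Set.mem_iUnion₂.1 hb
    obtain ⟨ε, hε, hγε, hδε⟩ := hdir γ hγ δ hδ
    obtain ⟨c, hc, hca, hcb⟩ := ε.2.2.2.1 a (hγε haγ) b (hδε hbδ)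
    exact ⟨c, Set.mem_biUnion hε hc, hca, hcb⟩
  · rintro E hEne hEdir s hs hsm
    obtain ⟨γ, hγ, hsγ⟩ := Set.mem_iUnion₂.1 hsm
    obtain ⟨d, hd, hdγ⟩ := γ.2.2.2.2 E hEne hEdir s hs hsγ
    exact ⟨d, hd, Set.mem_biUnion hγ hdγ⟩

theorem sof_lub_subset {D : Set (SOF X)} {s : SOF X} (hne : D.Nonempty)
    (hdir : DirectedOn (· ≤ ·) D) (hs : IsLUB D s) :
    s.1 ⊆ ⋃ γ ∈ D, γ.1 := by
  have : s ≤ ⟨⋃ γ ∈ D, γ.1, sof_union hne hdir⟩ :=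
    hs.2 (fun γ hγ => by exact fun a ha => Set.mem_biUnion hγ ha)
  exact this

theorem wb_char_fwd {α γ : SOF X} {y : X} (hy : y ∈ α.1) (hsub : ∀ a ∈ γ.1, y ≤ a) :
    wayBelow γ α := by
  intro D hne hdir s hs hαs
  have hys : y ∈ s.1 := hαs hy
  obtain ⟨d, hd, hyd⟩ := Set.mem_iUnion₂.1 (sof_lub_subset hne hdir hs hys)
  exact ⟨d, hd, fun a ha => d.2.2.1 (hsub a ha) hyd⟩

theorem dcal (hX : IsContDomain X) (α : SOF X) :
    (Set.Nonempty {γ : SOF X | ∃ y ∈ α.1, ∀ a ∈ γ.1, y ≤ a}) ∧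
    DirectedOn (· ≤ ·) {γ : SOF X | ∃ y ∈ α.1, ∀ a ∈ γ.1, y ≤ a} ∧
    IsLUB {γ : SOF X | ∃ y ∈ α.1, ∀ a ∈ γ.1, y ≤ a} α := by
  set 𝒟 := {γ : SOF X | ∃ y ∈ α.1, ∀ a ∈ γ.1, y ≤ a} with h𝒟
  have cover : ∀ x ∈ α.1, ∃ γ ∈ 𝒟, x ∈ γ.1 := by
    intro x hx
    obtain ⟨y, hyα, hyx⟩ := rounded hX α.2 hx
    obtain ⟨g, hg, hxg, hgsub⟩ := lemA hX hyx
    exact ⟨⟨g, hg⟩, ⟨y, hyα, fun a ha => wb_le (hgsub a ha)⟩, hxg⟩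
  have hne : 𝒟.Nonempty := by
    obtain ⟨x, hx⟩ := α.2.1
    obtain ⟨γ, hγ, _⟩ := cover x hx
    exact ⟨γ, hγ⟩
  have hdir : DirectedOn (· ≤ ·) 𝒟 := by
    rintro γ₁ ⟨y₁, hy₁, hs₁⟩ γ₂ ⟨y₂, hy₂, hs₂⟩
    obtain ⟨y, hyα, hyy₁, hyy₂⟩ := α.2.2.2.1 y₁ hy₁ y₂ hy₂
    obtain ⟨z, hzα, hzy⟩ := rounded hX α.2 hyα
    obtain ⟨g₀, hg₀, hyg₀, hg₀sub⟩ := lemA hX hzy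
    -- γ₃ := γ₁ ∪ γ₂ ∪ g₀
    set G := γ₁.1 ∪ γ₂.1 ∪ g₀ with hG
    have below : ∀ a ∈ G, ∃ c ∈ g₀, c ≤ a := by
      rintro a (⟨h | h⟩ | h)
      · exact ⟨y, hyg₀, hyy₁.trans (hs₁ a h)⟩
      · exact ⟨y, hyg₀, hyy₂.trans (hs₂ a h)⟩
      · exact ⟨a, h, le_rfl⟩
    have hGsof : IsScottOpenFilter G := by
      refine sof_of_rounded ⟨y, Or.inr hyg₀⟩ ?_ ?_ ?_
      · rintro a b hab (⟨h | h⟩ | h)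
        · exact Or.inl (Or.inl (γ₁.2.2.1 hab h))
        · exact Or.inl (Or.inr (γ₂.2.2.1 hab h))
        · exact Or.inr (hg₀.2.1 hab h)
      · intro a ha b hb
        obtain ⟨ca, hca, hcaa⟩ := below a ha
        obtain ⟨cb, hcb, hcbb⟩ := below b hb
        obtain ⟨c, hc, h1, h2⟩ := hg₀.2.2.1 ca hca cb hcb
        exact ⟨c, Or.inr hc, h1.trans hcaa, h2.trans hcbb⟩
      · rintro a (⟨h | h⟩ | h)
        · obtain ⟨w, hw, hww⟩ := rounded hX γ₁.2 h
          exact ⟨w, Or.inl (Or.inl hw), hww⟩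
        · obtain ⟨w, hw, hww⟩ := rounded hX γ₂.2 h
          exact ⟨w, Or.inl (Or.inr hw), hww⟩
        · obtain ⟨w, hw, hww⟩ := rounded hX hg₀ h
          exact ⟨w, Or.inr hw, hww⟩
    refine ⟨⟨G, hGsof⟩, ⟨z, hzα, ?_⟩, ?_, ?_⟩
    · rintro a (⟨h | h⟩ | h)
      · exact (wb_le hzy).trans (hyy₁.trans (hs₁ a h))
      · exact (wb_le hzy).trans (hyy₂.trans (hs₂ a h))
      · exact wb_le (hg₀sub a h)
    · exact fun a ha => Or.inl (Or.inl ha)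
    · exact fun a ha => Or.inl (Or.inr ha)
  refine ⟨hne, hdir, ?_, ?_⟩
  · rintro γ ⟨y, hyα, hsub⟩
    exact fun a ha => α.2.2.1 (hsub a ha) hyα
  · intro u hu
    intro x hx
    obtain ⟨γ, hγ, hxγ⟩ := cover x hx
    exact hu hγ hxγ

theorem sofX_cont (hX : IsContDomain X) : IsContDomain (SOF X) := by
  constructor
  · intro D hne hdir
    refine ⟨⟨⋃ γ ∈ D, γ.1, sof_union hne hdir⟩, ?_, ?_⟩
    · exact fun γ hγ a ha => Set.mem_biUnion hγ ha
    · intro u hu a ha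
      obtain ⟨γ, hγ, haγ⟩ := Set.mem_iUnion₂.1 ha
      exact hu hγ haγ
  · intro α
    obtain ⟨hne, hdir, hlub⟩ := dcal hX α
    have hsub : {γ : SOF X | ∃ y ∈ α.1, ∀ a ∈ γ.1, y ≤ a} ⊆ {γ | wayBelow γ α} := by
      rintro γ ⟨y, hy, hs⟩
      exact wb_char_fwd hy hs
    have key : ∀ γ : SOF X, wayBelow γ α →
        ∃ δ ∈ {γ : SOF X | ∃ y ∈ α.1, ∀ a ∈ γ.1, y ≤ a}, γ ≤ δ := by
      intro γ hγ
      exact hγ _ hne hdir α hlub le_rfl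
    refine ⟨?_, ?_, ?_, ?_⟩
    · obtain ⟨γ, hγ⟩ := hne; exact ⟨γ, hsub hγ⟩
    · intro γ₁ h₁ γ₂ h₂
      obtain ⟨δ₁, hδ₁, hle₁⟩ := key γ₁ h₁
      obtain ⟨δ₂, hδ₂, hle₂⟩ := key γ₂ h₂
      obtain ⟨δ₃, hδ₃, h13, h23⟩ := hdir δ₁ hδ₁ δ₂ hδ₂
      exact ⟨δ₃, hsub hδ₃, hle₁.trans h13, hle₂.trans h23⟩
    · exact fun γ hγ => wb_le hγ
    · intro u hu
      exact hlub.2 (fun γ hγ => hu (hsub hγ))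

theorem wb_char_bwd (hX : IsContDomain X) {γ α : SOF X} (h : wayBelow γ α) :
    ∃ y ∈ α.1, ∀ a ∈ γ.1, y ≤ a := by
  obtain ⟨hne, hdir, hlub⟩ := dcal hX α
  obtain ⟨δ, hδ, hγδ⟩ := h _ hne hdir α hlub le_rfl
  obtain ⟨y, hy, hsub⟩ := hδ
  exact ⟨y, hy, fun a ha => hsub a (hγδ ha)⟩

theorem inter_filter (hX : IsContDomain X) {α β : Set X} (hα : IsScottOpenFilter α)
    (hβ : IsScottOpenFilter β) {x : X} (hxα : x ∈ α) (hxβ : x ∈ β) :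
    ∃ γ : Set X, IsScottOpenFilter γ ∧ x ∈ γ ∧ γ ⊆ α ∧ γ ⊆ β := by
  obtain ⟨y₁, hy₁, hwb₁⟩ := rounded hX hα hxα
  obtain ⟨y₂, hy₂, hwb₂⟩ := rounded hX hβ hxβ
  obtain ⟨y₃, hy₃, h13, h23⟩ := (hX.2 x).2.1 y₁ hwb₁ y₂ hwb₂
  obtain ⟨γ, hγ, hxγ, hsub⟩ := lemA hX hy₃
  refine ⟨γ, hγ, hxγ, ?_, ?_⟩
  · exact fun a ha => hα.2.1 (h13.trans (wb_le (hsub a ha))) hy₁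
  · exact fun a ha => hβ.2.1 (h23.trans (wb_le (hsub a ha))) hy₂

theorem point_filter (hX : IsContDomain X) (x : X) :
    ∃ γ : Set X, IsScottOpenFilter γ ∧ x ∈ γ := by
  obtain ⟨y, hy⟩ := (hX.2 x).1
  obtain ⟨γ, hγ, hxγ, _⟩ := lemA hX hy
  exact ⟨γ, hγ, hxγ⟩

theorem etaSOF (hX : IsContDomain X) (x : X) :
    IsScottOpenFilter {α : SOF X | x ∈ α.1} := by
  refine sof_of_rounded ?_ ?_ ?_ ?_
  · obtain ⟨γ, hγ, hxγ⟩ := point_filter hX x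
    exact ⟨⟨γ, hγ⟩, hxγ⟩
  · exact fun α β hab ha => hab ha
  · intro α hα β hβ
    obtain ⟨γ, hγ, hxγ, h1, h2⟩ := inter_filter hX α.2 β.2 hα hβ
    exact ⟨⟨γ, hγ⟩, hxγ, h1, h2⟩
  · intro α hα
    obtain ⟨y, hyα, hyx⟩ := rounded hX α.2 hα
    obtain ⟨γ, hγ, hxγ, hsub⟩ := lemA hX hyx
    exact ⟨⟨γ, hγ⟩, hxγ, wb_char_fwd hyα (fun a ha => wb_le (hsub a ha))⟩

end SOFLevel

section Eta
variable {X : Type*} [Preorder X]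

theorem eta_surj (hX : IsContDomain X) (𝒜 : SOF (SOF X)) :
    ∃ x : X, {α : SOF X | x ∈ α.1} = 𝒜.1 := by
  have hcont := sofX_cont hX
  set S := {y : X | ∃ γ ∈ 𝒜.1, ∀ a ∈ γ.1, y ≤ a} with hS
  have hmem : ∀ γ ∈ 𝒜.1, ∃ y ∈ S, y ∈ γ.1 := by
    intro γ hγ
    obtain ⟨γ', hγ', hwb⟩ := rounded hcont 𝒜.2 hγ
    obtain ⟨y, hyγ, hsub⟩ := wb_char_bwd hX hwb
    exact ⟨y, ⟨γ', hγ', hsub⟩, hyγ⟩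
  have hSne : S.Nonempty := by
    obtain ⟨γ, hγ⟩ := 𝒜.2.1
    obtain ⟨y, hy, _⟩ := hmem γ hγ
    exact ⟨y, hy⟩
  have hSdir : DirectedOn (· ≤ ·) S := by
    rintro y₁ ⟨γ₁, hγ₁, hs₁⟩ y₂ ⟨γ₂, hγ₂, hs₂⟩
    obtain ⟨γ₃, hγ₃, h13, h23⟩ := 𝒜.2.2.2.1 γ₁ hγ₁ γ₂ hγ₂
    obtain ⟨y₃, hy₃S, hy₃γ₃⟩ := hmem γ₃ hγ₃
    exact ⟨y₃, hy₃S, hs₁ y₃ (h13 hy₃γ₃), hs₂ y₃ (h23 hy₃γ₃)⟩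
  obtain ⟨x, hx⟩ := hX.1 S hSne hSdir
  refine ⟨x, Set.Subset.antisymm ?_ ?_⟩
  · intro γ hγ
    obtain ⟨y, hyS, hyγ⟩ := γ.2.2.2.2 S hSne hSdir x hx hγ
    obtain ⟨δ, hδ, hsub⟩ := hyS
    exact 𝒜.2.2.1 (fun a ha => γ.2.2.1 (hsub a ha) hyγ) hδ
  · intro γ hγ
    obtain ⟨γ', hγ', hwb⟩ := rounded hcont 𝒜.2 hγ
    obtain ⟨y, hyγ, hsub⟩ := wb_char_bwd hX hwb
    exact γ.2.2.1 (hx.1 ⟨γ', hγ', hsub⟩) hyγ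

end Eta

/-- Lawson duality: for domains `X`, `Y`, the poset `FX` of Scott-open filters is
again a domain, `η_X : x ↦ {α ∈ FX | x ∈ α}` is an order isomorphism
`X ≅ FFX`, and for any Scott-open-filter-reflecting `f : X → Y`, the map
`F f : FY → FX`, `β ↦ f⁻¹(β)`, again reflects Scott-open filters.  Hence the
category of domains with Scott-open-filter-reflecting maps is self-dual. -/
theorem stmt_15 {X Y : Type*} [PartialOrder X] [PartialOrder Y]
    (hX : IsContDomain X) (hY : IsContDomain Y)
    (f : X → Y)
    (hf : ∀ β : Set Y, IsScottOpenFilter β → IsScottOpenFilter (f ⁻¹' β)) :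
    IsContDomain (SOF X) ∧
    (∃ e : X ≃o SOF (SOF X), ∀ (x : X) (α : SOF X), α ∈ (e x).1 ↔ x ∈ α.1) ∧
    (∀ 𝒜 : Set (SOF X), IsScottOpenFilter 𝒜 →
      IsScottOpenFilter {β : SOF Y | (⟨f ⁻¹' β.1, hf β.1 β.2⟩ : SOF X) ∈ 𝒜}) := by
  refine ⟨sofX_cont hX, ?_, ?_⟩
  · -- the order isomorphism
    set eta : X → SOF (SOF X) := fun x => ⟨{α : SOF X | x ∈ α.1}, etaSOF hX x⟩ with heta
    have hle : ∀ x y : X, eta x ≤ eta y ↔ x ≤ y := by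
      intro x y
      constructor
      · intro h
        by_contra hxy
        obtain ⟨γ, hγ, hxγ, hyγ⟩ := separate hX hxy
        exact hyγ (h (show (⟨γ, hγ⟩ : SOF X) ∈ (eta x).1 from hxγ))
      · intro h α hα
        exact α.2.2.1 h hα
    have hinj : Function.Injective eta := by
      intro x y hxy
      exact le_antisymm ((hle x y).1 (le_of_eq hxy)) ((hle y x).1 (le_of_eq hxy.symm))
    have hsurj : Function.Surjective eta := by
      intro 𝒜
      obtain ⟨x, hx⟩ := eta_surj hX 𝒜
      exact ⟨x, Subtype.ext hx⟩
    exact ⟨⟨Equiv.ofBijective eta ⟨hinj, hsurj⟩, fun {a b} => hle a b⟩,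
      fun x α => Iff.rfl⟩
  · -- functoriality
    intro 𝒜 h𝒜
    have hcont := sofX_cont hX
    have hup : ∀ {β β' : SOF Y}, β ≤ β' →
        (⟨f ⁻¹' β.1, hf β.1 β.2⟩ : SOF X) ∈ 𝒜 → (⟨f ⁻¹' β'.1, hf β'.1 β'.2⟩ : SOF X) ∈ 𝒜 := by
      intro β β' hββ' hβ
      exact h𝒜.2.1 (show (f ⁻¹' β.1 : Set X) ⊆ f ⁻¹' β'.1 from fun a ha => hββ' ha) hβ
    -- from γ' ∈ 𝒜 with γ' ⊆ ↑x, any SOF β of Y containing f x gives f⁻¹ β ∈ 𝒜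
    have key : ∀ {γ' : SOF X} {x : X}, γ' ∈ 𝒜 → (∀ a ∈ γ'.1, x ≤ a) →
        ∀ {β : Set Y} (hβ : IsScottOpenFilter β), f x ∈ β →
        (⟨f ⁻¹' β, hf β hβ⟩ : SOF X) ∈ 𝒜 := by
      intro γ' x hγ' hsub β hβ hfx
      have hpre := hf β hβ
      have : γ'.1 ⊆ f ⁻¹' β := fun a ha => hpre.2.1 (hsub a ha) hfx
      exact h𝒜.2.1 this hγ'
    refine sof_of_rounded ?_ ?_ ?_ ?_
    · -- nonempty
      obtain ⟨γ, hγ⟩ := h𝒜.1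
      obtain ⟨γ', hγ', hwb⟩ := rounded hcont h𝒜 hγ
      obtain ⟨x, hxγ, hsub⟩ := wb_char_bwd hX hwb
      obtain ⟨β, hβ, hfxβ⟩ := point_filter hY (f x)
      exact ⟨⟨β, hβ⟩, key hγ' hsub hβ hfxβ⟩
    · exact fun β β' h => hup h
    · -- directed
      intro β₁ hβ₁ β₂ hβ₂
      obtain ⟨γ, hγ, h1, h2⟩ := h𝒜.2.2.1 _ hβ₁ _ hβ₂
      obtain ⟨γ', hγ', hwb⟩ := rounded hcont h𝒜 hγ
      obtain ⟨x, hxγ, hsub⟩ := wb_char_bwd hX hwb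
      obtain ⟨β₃, hβ₃, hfxβ₃, hs1, hs2⟩ := inter_filter hY β₁.2 β₂.2 (h1 hxγ) (h2 hxγ)
      exact ⟨⟨β₃, hβ₃⟩, key hγ' hsub hβ₃ hfxβ₃, hs1, hs2⟩
    · -- rounded
      intro β hβ
      obtain ⟨γ', hγ', hwb⟩ := rounded hcont h𝒜 hβ
      obtain ⟨x, hxγ, hsub⟩ := wb_char_bwd hX hwb
      have hfxβ : f x ∈ β.1 := hxγ
      obtain ⟨y, hyβ, hywb⟩ := rounded hY β.2 hfxβ
      obtain ⟨β', hβ', hfxβ', hsub'⟩ := lemA hY hywb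
      refine ⟨⟨β', hβ'⟩, key hγ' hsub hβ' hfxβ', ?_⟩
      exact wb_char_fwd hyβ (fun a ha => wb_le (hsub' a ha))
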